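/- (Failure condition of the non-centered (vanilla) classifier on the block model.) Suppose p > q > 0 and 1 ≤ s_k ≤ n_k for every k. For each label l, let (T^{(l)}_1,…,T^{(l)}_K) satisfy the balance equations for label l. Then for every k ≠ 1, the inequality T^{(1)}_1 > T^{(k)}_1 holds if and only if s_1·q·(n_1(p−q)+Nq)/(s_1(p−q)+Nq) + s_1·(p−q)·(1 − Σ_{j=1}^K (n_j − s_j)·q/(s_j(p−q)+Nq)) > s_k·q·(n_k(p−q)+Nq)/(s_k(p−q)+Nq). In particular, non-seed nodes of block 1 may be misclassified by the vanilla classifier even though p > q. -/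

import Mathlib

open Finset

/-- failure condition of the non-centered, vanilla classifier on the
block model: with `K ≥ 2` blocks, `p > q > 0` and `1 ≤ s k ≤ n k` for every
`k`, suppose for every label `l` the temperatures `T l` satisfy the balance
equations of the Dirichlet problem for label `l`. Then for every `k ≠ 1`
(block 1 indexed by `i1`), the non-seed nodes of block 1 are scored higher by
label 1 than by label `k`, i.e. `T^{(1)}_1 > T^{(k)}_1`, if and only if
`s₁·q·(n₁(p−q)+Nq)/(s₁(p−q)+Nq)
  + s₁·(p−q)·(1 − ∑_j (n_j − s_j)·q/(s_j(p−q)+Nq))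
  > s_k·q·(n_k(p−q)+Nq)/(s_k(p−q)+Nq)`. -/
theorem vanilla_classifier_condition_block_model
    (K : ℕ) (hK : 2 ≤ K) (n s : Fin K → ℕ)
    (hn : ∀ k, 1 ≤ n k) (hs : ∀ k, s k ≤ n k) (hs1 : ∀ k, 1 ≤ s k)
    (p q : ℝ) (hpq : p > q) (hq : q > 0)
    (i1 : Fin K) (T : Fin K → Fin K → ℝ)
    (N : ℕ) (hN : N = ∑ k, n k)
    (hbal : ∀ l, ∀ k, ((n k : ℝ) * (p - q) + (N : ℝ) * q) * T l k
      = (if k = l then (s l : ℝ) * p else (s l : ℝ) * q)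
        + ((n k : ℝ) - (s k : ℝ)) * p * T l k
        + ∑ j ∈ univ.erase k, ((n j : ℝ) - (s j : ℝ)) * q * T l j) :
    ∀ k, k ≠ i1 →
      (T i1 i1 > T k i1 ↔
        (s i1 : ℝ) * q * (((n i1 : ℝ) * (p - q) + (N : ℝ) * q)
            / ((s i1 : ℝ) * (p - q) + (N : ℝ) * q))
          + (s i1 : ℝ) * (p - q)
            * (1 - ∑ j, ((n j : ℝ) - (s j : ℝ)) * q
                / ((s j : ℝ) * (p - q) + (N : ℝ) * q))
        > (s k : ℝ) * q * (((n k : ℝ) * (p - q) + (N : ℝ) * q)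
            / ((s k : ℝ) * (p - q) + (N : ℝ) * q))) := by
  intro k hk
  -- basic positivity
  have hNn : ∀ j, (n j : ℝ) ≤ (N : ℝ) := by
    intro j
    have : n j ≤ N := hN ▸ Finset.single_le_sum (f := n) (fun _ _ => Nat.zero_le _) (mem_univ j)
    exact_mod_cast this
  have hN1 : (1 : ℝ) ≤ (N : ℝ) := le_trans (by exact_mod_cast hn i1) (hNn i1)
  have hNpos : (0 : ℝ) < (N : ℝ) := lt_of_lt_of_le one_pos hN1
  have hD : ∀ j, 0 < (s j : ℝ) * (p - q) + (N : ℝ) * q := by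
    intro j
    have h1 : (0:ℝ) ≤ (s j : ℝ) := by positivity
    nlinarith [mul_pos hNpos hq]
  have hD0 : ∀ j, (s j : ℝ) * (p - q) + (N : ℝ) * q ≠ 0 := fun j => (hD j).ne'
  have hsn : ∀ j, (s j : ℝ) ≤ (n j : ℝ) := fun j => by exact_mod_cast hs j
  have hs1' : ∀ j, (1:ℝ) ≤ (s j : ℝ) := fun j => by exact_mod_cast hs1 j
  -- the key reduced balance equation
  set S : Fin K → ℝ := fun l => ∑ j, ((n j : ℝ) - (s j : ℝ)) * q * T l j with hSdef
  have key : ∀ l k', ((s k' : ℝ) * (p - q) + (N : ℝ) * q) * T l k'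
      = (if k' = l then (s l : ℝ) * p else (s l : ℝ) * q) + S l := by
    intro l k'
    have hb := hbal l k'
    rw [Finset.sum_erase_eq_sub (mem_univ k')] at hb
    simp only [hSdef]
    linear_combination hb
  have hT : ∀ l k', T l k'
      = ((if k' = l then (s l : ℝ) * p else (s l : ℝ) * q) + S l)
        / ((s k' : ℝ) * (p - q) + (N : ℝ) * q) := by
    intro l k'
    rw [eq_div_iff (hD0 k')]
    linear_combination key l k'
  -- abbreviation for the contraction factor
  set c : ℝ := ∑ j, ((n j : ℝ) - (s j : ℝ)) * q
      / ((s j : ℝ) * (p - q) + (N : ℝ) * q) with hcdef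
  have hc1 : c < 1 := by
    have hstep : ∀ j ∈ univ, ((n j : ℝ) - (s j : ℝ)) * q
        / ((s j : ℝ) * (p - q) + (N : ℝ) * q) ≤ ((n j : ℝ) - (s j : ℝ)) / N := by
      intro j _
      rw [div_le_div_iff₀ (hD j) hNpos]
      have h1 : (0:ℝ) ≤ ((n j : ℝ) - (s j : ℝ)) := by linarith [hsn j]
      nlinarith [mul_nonneg (mul_nonneg h1 (by positivity : (0:ℝ) ≤ (s j : ℝ))) (le_of_lt (sub_pos.mpr hpq))]
    have hsum : ∑ j, ((n j : ℝ) - (s j : ℝ)) < (N : ℝ) := by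
      have h2 : (2 : ℝ) ≤ ∑ j, (s j : ℝ) := by
        calc (2:ℝ) ≤ (K : ℝ) := by exact_mod_cast hK
        _ = ∑ _j : Fin K, (1:ℝ) := by simp
        _ ≤ ∑ j, (s j : ℝ) := Finset.sum_le_sum (fun j _ => hs1' j)
      have h3 : (N : ℝ) = ∑ j, (n j : ℝ) := by
        rw [hN]; push_cast; ring
      rw [Finset.sum_sub_distrib, ← h3]
      linarith
    calc c ≤ ∑ j, ((n j : ℝ) - (s j : ℝ)) / N := Finset.sum_le_sum hstep
      _ = (∑ j, ((n j : ℝ) - (s j : ℝ))) / N := by rw [Finset.sum_div]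
      _ < 1 := by rw [div_lt_one hNpos]; exact hsum
  have h1c : 0 < 1 - c := by linarith
  -- the fixed-point identity for S
  have hSc : ∀ l, S l * (1 - c)
      = (s l : ℝ) * q * c + (s l : ℝ) * (p - q)
        * (((n l : ℝ) - (s l : ℝ)) * q / ((s l : ℝ) * (p - q) + (N : ℝ) * q)) := by
    intro l
    have hexp : S l = ∑ j, ((s l : ℝ) * q * (((n j : ℝ) - (s j : ℝ)) * q
          / ((s j : ℝ) * (p - q) + (N : ℝ) * q))
        + (if j = l then (s l : ℝ) * (p - q) * (((n j : ℝ) - (s j : ℝ)) * q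
          / ((s j : ℝ) * (p - q) + (N : ℝ) * q)) else 0)
        + S l * (((n j : ℝ) - (s j : ℝ)) * q / ((s j : ℝ) * (p - q) + (N : ℝ) * q))) := by
      rw [hSdef]
      apply Finset.sum_congr rfl
      intro j _
      rw [hT l j]
      have hj := hD0 j
      split_ifs with h
      · simp only [hSdef]
        field_simp
        ring
      · simp only [hSdef]
        field_simp
        ring
    rw [Finset.sum_add_distrib, Finset.sum_add_distrib, ← Finset.mul_sum, ← Finset.mul_sum,
      Finset.sum_ite_eq' univ l, if_pos (mem_univ l), ← hcdef] at hexp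
    linarith [hexp]
  -- the two scores, compared on block i1
  have e1 : ((s i1 : ℝ) * (p - q) + (N : ℝ) * q) * T i1 i1 = (s i1 : ℝ) * p + S i1 := by
    have := key i1 i1; simpa using this
  have e2 : ((s i1 : ℝ) * (p - q) + (N : ℝ) * q) * T k i1 = (s k : ℝ) * q + S k := by
    have := key k i1; rw [if_neg (Ne.symm hk)] at this; exact this
  have hiff1 : T i1 i1 > T k i1 ↔ (s i1 : ℝ) * p + S i1 > (s k : ℝ) * q + S k := by
    rw [← e1, ← e2]
    exact (mul_lt_mul_iff_right₀ (hD i1)).symm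
  have hiff2 : (s i1 : ℝ) * p + S i1 > (s k : ℝ) * q + S k
      ↔ ((s i1 : ℝ) * p + S i1) * (1 - c) > ((s k : ℝ) * q + S k) * (1 - c) :=
    (mul_lt_mul_iff_left₀ h1c).symm
  have eqL : ((s i1 : ℝ) * p + S i1) * (1 - c)
      = (s i1 : ℝ) * q * (((n i1 : ℝ) * (p - q) + (N : ℝ) * q)
            / ((s i1 : ℝ) * (p - q) + (N : ℝ) * q))
          + (s i1 : ℝ) * (p - q) * (1 - c) := by
    have h := hSc i1
    have hd : ((s i1 : ℝ) * (p - q) + (N : ℝ) * q)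
        / ((s i1 : ℝ) * (p - q) + (N : ℝ) * q) = 1 := div_self (hD0 i1)
    linear_combination h - ((s i1 : ℝ) * q) * hd
  have eqR : ((s k : ℝ) * q + S k) * (1 - c)
      = (s k : ℝ) * q * (((n k : ℝ) * (p - q) + (N : ℝ) * q)
            / ((s k : ℝ) * (p - q) + (N : ℝ) * q)) := by
    have h := hSc k
    have hd : ((s k : ℝ) * (p - q) + (N : ℝ) * q)
        / ((s k : ℝ) * (p - q) + (N : ℝ) * q) = 1 := div_self (hD0 k)
    linear_combination h - ((s k : ℝ) * q) * hd
  rw [hiff1, hiff2, eqL, eqR]
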